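/- Let M ≥ 1 and let f be nondecreasing with f(x) ≤ x. Suppose for each nonzero integer n with |n| = r, there is a path of length at most M·r^{m−2}·(f(Mr)+1) connecting a₀^{4n} and a_m·a₀^{4n} outside the ball B(e, 2r) in a Cayley graph where additionally |a_m^i a₀^j| = |i| + |j| for all integers i, j with appropriate signs. Then for nonzero integers n₁, n₂, r with |n₁| = |n₂| = r and n₂ > 0, concatenating r translated copies of such paths together with segments labeled a₀^{3n₁} (length 3r) and a₀^{−4n₁} (length 4r) yields a path connecting a₀^{n₁} and a_m^{n₂} outside B(e, r) of length at most r·M·(2r)^{m−2}·(f(2Mr)+1) + 7r. -/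

import Mathlib

/-- Word length of `g` with respect to the generating set `S`: the least length of a word
in `S ∪ S⁻¹` representing `g`. -/
noncomputable def wordLength {G : Type*} [Group G] (S : Set G) (g : G) : ℕ :=
  sInf {n | ∃ l : List G, (∀ x ∈ l, x ∈ S ∨ x⁻¹ ∈ S) ∧ l.prod = g ∧ l.length = n}

/-- Adjacency in the Cayley graph of `(G, S)`. -/
def CayleyAdj {G : Type*} [Group G] (S : Set G) (x y : G) : Prop :=
  ∃ s : G, (s ∈ S ∨ s⁻¹ ∈ S) ∧ y = x * s

section Helpers

variable {G : Type*} [Group G] {S : Set G}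

lemma exists_word (hgen : Subgroup.closure S = ⊤) (g : G) :
    ∃ l : List G, (∀ x ∈ l, x ∈ S ∨ x⁻¹ ∈ S) ∧ l.prod = g := by
  have hg : g ∈ Subgroup.closure S := by rw [hgen]; trivial
  induction hg using Subgroup.closure_induction with
  | mem s hs => exact ⟨[s], by simp [hs], by simp⟩
  | one => exact ⟨[], by simp, by simp⟩
  | mul a b _ _ iha ihb =>
      obtain ⟨la, hla, hpa⟩ := iha
      obtain ⟨lb, hlb, hpb⟩ := ihb
      refine ⟨la ++ lb, ?_, by simp [hpa, hpb]⟩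
      intro x hx
      rcases List.mem_append.mp hx with h | h
      exacts [hla x h, hlb x h]
  | inv a _ ih =>
      obtain ⟨la, hla, hpa⟩ := ih
      refine ⟨(la.map (·⁻¹)).reverse, ?_, ?_⟩
      · intro x hx
        simp only [List.mem_reverse, List.mem_map] at hx
        obtain ⟨y, hy, rfl⟩ := hx
        rcases hla y hy with h | h
        · exact Or.inr (by simpa using h)
        · exact Or.inl h
      · rw [← List.prod_inv_reverse, hpa]

lemma exists_min_word (hgen : Subgroup.closure S = ⊤) (g : G) :
    ∃ l : List G, (∀ x ∈ l, x ∈ S ∨ x⁻¹ ∈ S) ∧ l.prod = g ∧ l.length = wordLength S g := by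
  have hne : {n | ∃ l : List G, (∀ x ∈ l, x ∈ S ∨ x⁻¹ ∈ S) ∧ l.prod = g ∧ l.length = n}.Nonempty := by
    obtain ⟨l, h1, h2⟩ := exists_word hgen g
    exact ⟨l.length, l, h1, h2, rfl⟩
  exact Nat.sInf_mem hne

lemma wordLength_mul_le (hgen : Subgroup.closure S = ⊤) (a b : G) :
    wordLength S (a * b) ≤ wordLength S a + wordLength S b := by
  obtain ⟨la, h1, h2, h3⟩ := exists_min_word hgen a
  obtain ⟨lb, g1, g2, g3⟩ := exists_min_word hgen b
  have : wordLength S (a * b) ≤ (la ++ lb).length := by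
    refine Nat.sInf_le ⟨la ++ lb, ?_, by simp [h2, g2], rfl⟩
    intro x hx
    rcases List.mem_append.mp hx with h | h
    exacts [h1 x h, g1 x h]
  simpa [h3, g3] using this

lemma glue {α : Type*} {A : α → α → Prop} {l₁ l₂ : List α} {b : α}
    (h₁ : List.Chain' A l₁) (h₂ : List.Chain' A l₂)
    (e₁ : l₁.getLast? = some b) (e₂ : l₂.head? = some b) :
    List.Chain' A (l₁ ++ l₂.tail) ∧
    (l₁ ++ l₂.tail).head? = l₁.head? ∧
    (l₁ ++ l₂.tail).getLast? = l₂.getLast? ∧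
    (l₁ ++ l₂.tail).length + 1 = l₁.length + l₂.length ∧
    ∀ x ∈ l₁ ++ l₂.tail, x ∈ l₁ ∨ x ∈ l₂ := by
  have hl₁ne : l₁ ≠ [] := by
    intro h; rw [h] at e₁; simp at e₁
  obtain ⟨c, t, rfl⟩ : ∃ c t, l₂ = c :: t := by
    cases l₂ with
    | nil => simp at e₂
    | cons c t => exact ⟨c, t, rfl⟩
  have hcb : c = b := by simpa using e₂
  subst hcb
  obtain ⟨hbt, ht⟩ := List.isChain_cons.mp h₂
  refine ⟨?_, ?_, ?_, ?_, ?_⟩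
  · refine List.IsChain.append h₁ ht ?_
    intro x hx y hy
    rw [e₁] at hx
    simp only [Option.mem_def, Option.some.injEq] at hx
    subst hx
    exact hbt y hy
  · rw [List.head?_append]
    cases l₁ with
    | nil => exact absurd rfl hl₁ne
    | cons a l => rfl
  · show (l₁ ++ t).getLast? = (c :: t).getLast?
    cases t with
    | nil => simpa using e₁
    | cons d u =>
        rw [List.getLast?_append, List.getLast?_cons_cons,
          Option.or_of_isSome (by simp [List.getLast?_isSome])]
  · simp only [List.length_append, List.length_cons, List.length_tail]
    omega
  · intro x hx
    rcases List.mem_append.mp hx with h | h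
    · exact Or.inl h
    · exact Or.inr (List.mem_cons_of_mem _ h)

lemma chain_map_mul {l : List G} (g : G) (h : l.Chain' (CayleyAdj S)) :
    (l.map (fun x => g * x)).Chain' (CayleyAdj S) := by
  show List.IsChain _ _
  rw [List.isChain_map]
  refine List.IsChain.imp ?_ h
  rintro a b ⟨s, hs, rfl⟩
  exact ⟨s, hs, by rw [mul_assoc]⟩

lemma segment_chain {c : G} (hc : c ∈ S ∨ c⁻¹ ∈ S) (g : ℕ → G) (N : ℕ)
    (hg : ∀ j, g (j + 1) = g j * c) :
    (List.map g (List.range (N + 1))).Chain' (CayleyAdj S) := by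
  show List.IsChain _ _
  rw [List.isChain_map, List.isChain_range_succ]
  intro j _
  exact ⟨c, hc, hg j⟩

lemma head?_map_range {α : Type*} (g : ℕ → α) (N : ℕ) :
    (List.map g (List.range (N + 1))).head? = some (g 0) := by
  rw [List.range_succ_eq_map]
  simp

lemma getLast?_map_range {α : Type*} (g : ℕ → α) (N : ℕ) :
    (List.map g (List.range (N + 1))).getLast? = some (g N) := by
  rw [List.range_succ, List.map_append]
  simp

end Helpers

/-- Quantitative core of the implication `(P_m) ⟹ (Q_m)`: if for every nonzero `n` with
`|n| = r` there is a path connecting `a₀^{4n}` to `a_m·a₀^{4n}` outside `B(e, 2r)` of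
length at most `M·r^{m-2}·(f(Mr)+1)`, then for nonzero `n₁, n₂` with `|n₁| = |n₂| = r`
and `n₂ > 0` there is a path connecting `a₀^{n₁}` to `a_m^{n₂}` outside `B(e, r)` of
length at most `r·M·(2r)^{m-2}·(f(2Mr)+1) + 7r`. -/
theorem P_implies_Q {G : Type*} [Group G]
    (S : Set G) (hSfin : S.Finite) (hgen : Subgroup.closure S = ⊤)
    (a₀ aₘ : G) (ha₀ : a₀ ∈ S) (haₘ : aₘ ∈ S)
    (m : ℕ) (hm : 2 ≤ m) (M : ℝ) (hM : 1 ≤ M)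
    (f : ℝ → ℝ) (hfmono : ∀ x y : ℝ, 0 < x → x ≤ y → f x ≤ f y)
    (hfle : ∀ x : ℝ, 0 < x → f x ≤ x)
    (hlcool : ∀ i j : ℤ, wordLength S (aₘ ^ i * a₀ ^ j) = i.natAbs + j.natAbs)
    (hP : ∀ n : ℤ, n ≠ 0 →
      ∃ l : List G, l.Chain' (CayleyAdj S) ∧
        l.head? = some (a₀ ^ (4 * n)) ∧ l.getLast? = some (aₘ * a₀ ^ (4 * n)) ∧
        (∀ x ∈ l, 2 * n.natAbs ≤ wordLength S x) ∧
        ((l.length : ℝ) - 1 ≤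
          M * (n.natAbs : ℝ) ^ (m - 2) * (f (M * n.natAbs) + 1))) :
    ∀ n₁ n₂ : ℤ, n₁ ≠ 0 → 0 < n₂ → n₁.natAbs = n₂.natAbs →
      ∃ l : List G, l.Chain' (CayleyAdj S) ∧
        l.head? = some (a₀ ^ n₁) ∧ l.getLast? = some (aₘ ^ n₂) ∧
        (∀ x ∈ l, n₂.natAbs ≤ wordLength S x) ∧
        ((l.length : ℝ) - 1 ≤
          (n₂.natAbs : ℝ) * M * (2 * (n₂.natAbs : ℝ)) ^ (m - 2) *
            (f (2 * M * n₂.natAbs) + 1) + 7 * (n₂.natAbs : ℝ)) := by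
  intro n₁ n₂ hn₁ hn₂ hr
  set r := n₂.natAbs with hrdef
  have hr1 : 1 ≤ r := by omega
  have hn₂eq : n₂ = (r : ℤ) := by omega
  obtain ⟨s, hs_unit, hn₁eq⟩ : ∃ s : ℤ, (s = 1 ∨ s = -1) ∧ n₁ = s * r := by
    rcases Int.natAbs_eq n₁ with h | h
    · exact ⟨1, Or.inl rfl, by omega⟩
    · exact ⟨-1, Or.inr rfl, by omega⟩
  have hc : a₀ ^ s ∈ S ∨ (a₀ ^ s)⁻¹ ∈ S := by
    rcases hs_unit with rfl | rfl
    · exact Or.inl (by simpa using ha₀)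
    · exact Or.inr (by simpa using ha₀)
  have hcneg : a₀ ^ (-s) ∈ S ∨ (a₀ ^ (-s))⁻¹ ∈ S := by
    rcases hs_unit with rfl | rfl
    · exact Or.inr (by simpa using ha₀)
    · exact Or.inl (by simpa using ha₀)
  set B : ℝ := M * (r : ℝ) ^ (m - 2) * (f (M * r) + 1) with hBdef
  -- word length lower bound for translated points
  have htrans : ∀ k : ℕ, k + 1 ≤ r → ∀ x : G, 2 * r ≤ wordLength S x →
      r ≤ wordLength S (aₘ ^ (k : ℤ) * x) := by
    intro k hk x hx
    have h1 : wordLength S x ≤ wordLength S (aₘ ^ (-(k : ℤ))) +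
        wordLength S (aₘ ^ (k : ℤ) * x) := by
      have h := wordLength_mul_le hgen (aₘ ^ (-(k : ℤ))) (aₘ ^ (k : ℤ) * x)
      rw [← mul_assoc, show aₘ ^ (-(k : ℤ)) * aₘ ^ (k : ℤ) = 1 from by
        rw [← zpow_add]; simp, one_mul] at h
      exact h
    have h2 : wordLength S (aₘ ^ (-(k : ℤ))) = k := by
      have := hlcool (-(k : ℤ)) 0
      simpa using this
    omega
  -- middle part: concatenated translated paths
  have middle : ∀ k : ℕ, 1 ≤ k → k ≤ r →
      ∃ l : List G, l.Chain' (CayleyAdj S) ∧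
        l.head? = some (a₀ ^ (4 * n₁)) ∧
        l.getLast? = some (aₘ ^ (k : ℤ) * a₀ ^ (4 * n₁)) ∧
        (∀ x ∈ l, r ≤ wordLength S x) ∧
        ((l.length : ℝ) - 1 ≤ (k : ℝ) * B) := by
    intro k
    induction k with
    | zero => omega
    | succ k ih =>
      intro _ hk
      rcases Nat.eq_zero_or_pos k with rfl | hkpos
      · obtain ⟨l, hch, hh, hl, hmem, hlen⟩ := hP n₁ hn₁
        refine ⟨l, hch, hh, by rw [hl]; norm_num, ?_, ?_⟩
        · intro x hx
          have := hmem x hx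
          rw [hr] at this
          omega
        · rw [hr] at hlen
          simpa using hlen
      · obtain ⟨l, hch, hh, hl, hmem, hlen⟩ := ih (by omega) (by omega)
        obtain ⟨p, pch, ph, plast, pmem, plen⟩ := hP n₁ hn₁
        set q := p.map (fun x => aₘ ^ (k : ℤ) * x) with hqdef
        have qch : q.Chain' (CayleyAdj S) := chain_map_mul _ pch
        have qh : q.head? = some (aₘ ^ (k : ℤ) * a₀ ^ (4 * n₁)) := by
          rw [hqdef, List.head?_map, ph]; rfl
        have qlast : q.getLast? = some (aₘ ^ ((k : ℤ) + 1) * a₀ ^ (4 * n₁)) := by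
          rw [hqdef, List.getLast?_map, plast]
          simp only [Option.map_some]
          rw [zpow_add_one, mul_assoc]
        obtain ⟨gch, ghead, glast, glen, gmem⟩ := glue hch qch hl qh
        refine ⟨l ++ q.tail, gch, by rw [ghead, hh], ?_, ?_, ?_⟩
        · rw [glast, qlast, show ((k:ℤ) + 1) = (((k+1:ℕ)):ℤ) by push_cast; ring]
        · intro x hx
          rcases gmem x hx with h | h
          · exact hmem x h
          · rw [hqdef] at h
            simp only [List.mem_map] at h
            obtain ⟨y, hy, rfl⟩ := h
            have h2r : 2 * r ≤ wordLength S y := by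
              have := pmem y hy; rw [hr] at this; omega
            exact htrans k (by omega) y h2r
        · have hq_len : q.length = p.length := by rw [hqdef, List.length_map]
          have hple : (p.length : ℝ) - 1 ≤ B := by rw [hr] at plen; exact plen
          have : ((l ++ q.tail).length : ℝ) = (l.length : ℝ) + (p.length : ℝ) - 1 := by
            have h' : (l ++ q.tail).length + 1 = l.length + p.length := by
              rw [glen, hq_len]
            have h'' := congrArg (fun n : ℕ => (n : ℝ)) h'
            push_cast at h''
            linarith
          rw [this]
          push_cast
          nlinarith [hlen, hple]
  obtain ⟨mid, mch, mhead, mlast, mmem, mlen⟩ := middle r hr1 le_rfl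
  -- first segment: a₀^{n₁} to a₀^{4 n₁}
  set F : List G := List.map (fun j : ℕ => a₀ ^ (s * ((r : ℤ) + j))) (List.range (3 * r + 1))
    with hFdef
  have Fch : F.Chain' (CayleyAdj S) := by
    refine segment_chain hc _ _ ?_
    intro j
    rw [← zpow_add]
    congr 1
    push_cast
    ring
  have Fhead : F.head? = some (a₀ ^ n₁) := by
    rw [hFdef, head?_map_range,
      show s * ((r : ℤ) + ((0:ℕ):ℤ)) = n₁ from by rw [hn₁eq]; push_cast; ring]
  have Flast : F.getLast? = some (a₀ ^ (4 * n₁)) := by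
    rw [hFdef, getLast?_map_range,
      show s * ((r : ℤ) + ((3*r:ℕ):ℤ)) = 4 * n₁ from by rw [hn₁eq]; push_cast; ring]
  have Flen : F.length = 3 * r + 1 := by
    rw [hFdef, List.length_map, List.length_range]
  have Fmem : ∀ x ∈ F, r ≤ wordLength S x := by
    intro x hx
    rw [hFdef] at hx
    simp only [List.mem_map] at hx
    obtain ⟨j, _, rfl⟩ := hx
    have h1 : wordLength S (a₀ ^ (s * ((r : ℤ) + j))) = (s * ((r : ℤ) + j)).natAbs := by
      have := hlcool 0 (s * ((r : ℤ) + j))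
      simpa using this
    rw [h1]
    rcases hs_unit with rfl | rfl <;> simp only [one_mul, neg_mul, Int.natAbs_neg] <;> omega
  -- last segment: aₘ^{n₂} a₀^{4 n₁} to aₘ^{n₂}
  set L : List G := List.map (fun j : ℕ => aₘ ^ n₂ * a₀ ^ (s * ((4 * r : ℤ) - j)))
    (List.range (4 * r + 1)) with hLdef
  have Lch : L.Chain' (CayleyAdj S) := by
    refine segment_chain hcneg _ _ ?_
    intro j
    rw [mul_assoc, ← zpow_add]
    congr 2
    push_cast
    ring
  have Lhead : L.head? = some (aₘ ^ (r : ℤ) * a₀ ^ (4 * n₁)) := by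
    rw [hLdef, head?_map_range,
      show s * ((4 * r : ℤ) - ((0:ℕ):ℤ)) = 4 * n₁ from by rw [hn₁eq]; push_cast; ring,
      hn₂eq]
  have Llast : L.getLast? = some (aₘ ^ n₂) := by
    rw [hLdef, getLast?_map_range]
    congr 1
    have : s * ((4 * r : ℤ) - (4 * r : ℕ)) = 0 := by push_cast; ring
    rw [this, zpow_zero, mul_one]
  have Llen : L.length = 4 * r + 1 := by
    rw [hLdef, List.length_map, List.length_range]
  have Lmem : ∀ x ∈ L, r ≤ wordLength S x := by
    intro x hx
    rw [hLdef] at hx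
    simp only [List.mem_map] at hx
    obtain ⟨j, _, rfl⟩ := hx
    rw [hlcool n₂ (s * ((4 * r : ℤ) - j))]
    omega
  -- glue everything
  obtain ⟨g1ch, g1head, g1last, g1len, g1mem⟩ := glue Fch mch Flast mhead
  obtain ⟨g2ch, g2head, g2last, g2len, g2mem⟩ := glue g1ch Lch (by rw [g1last, mlast]) Lhead
  refine ⟨(F ++ mid.tail) ++ L.tail, g2ch, ?_, by rw [g2last, Llast], ?_, ?_⟩
  · rw [g2head, g1head, Fhead]
  · intro x hx
    rcases g2mem x hx with h | h
    · rcases g1mem x h with h' | h'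
      exacts [Fmem x h', mmem x h']
    · exact Lmem x h
  -- length bound
  · have hmid_ne : mid ≠ [] := by
      intro h; rw [h] at mhead; simp at mhead
    have hmid1 : 1 ≤ mid.length := List.length_pos_iff.mpr hmid_ne
    have hTlen : ((F ++ mid.tail) ++ L.tail).length = mid.length + 7 * r := by omega
    have hB0 : 0 ≤ B := by
      obtain ⟨p, pch, ph, plast, pmem, plen⟩ := hP n₁ hn₁
      have hp_ne : p ≠ [] := by intro h; rw [h] at ph; simp at ph
      have hp1 : 1 ≤ p.length := List.length_pos_iff.mpr hp_ne
      rw [hr] at plen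
      have : (0 : ℝ) ≤ (p.length : ℝ) - 1 := by
        have : (1 : ℝ) ≤ (p.length : ℝ) := by exact_mod_cast hp1
        linarith
      linarith
    have hrR : (1 : ℝ) ≤ (r : ℝ) := by exact_mod_cast hr1
    have hMrpos : (0 : ℝ) < M * (r : ℝ) ^ (m - 2) := by positivity
    have hf0 : 0 ≤ f (M * r) + 1 := by
      by_contra h
      push_neg at h
      nlinarith
    have hf2 : f (M * r) + 1 ≤ f (2 * M * r) + 1 := by
      have := hfmono (M * r) (2 * M * r) (by nlinarith) (by nlinarith)
      linarith
    have hpow : ((r : ℝ)) ^ (m - 2) ≤ (2 * (r : ℝ)) ^ (m - 2) := by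
      apply pow_le_pow_left₀ (by positivity)
      linarith
    have hBle : B ≤ M * (2 * (r : ℝ)) ^ (m - 2) * (f (2 * M * r) + 1) := by
      rw [hBdef]
      have h1 : M * (r : ℝ) ^ (m - 2) ≤ M * (2 * (r : ℝ)) ^ (m - 2) := by nlinarith
      exact mul_le_mul h1 hf2 hf0 (by positivity)
    have : (((F ++ mid.tail) ++ L.tail).length : ℝ) - 1 ≤ (r : ℝ) * B + 7 * r := by
      rw [hTlen]
      push_cast
      linarith [mlen]
    calc (((F ++ mid.tail) ++ L.tail).length : ℝ) - 1 ≤ (r : ℝ) * B + 7 * r := this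
      _ ≤ (r : ℝ) * M * (2 * (r : ℝ)) ^ (m - 2) * (f (2 * M * r) + 1) + 7 * r := by
          have := mul_le_mul_of_nonneg_left hBle (by positivity : (0:ℝ) ≤ (r:ℝ))
          linarith [this]
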